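/- Let β ≥ 0, let ℓ = [x̲, x̄] ⊂ ℝ be a bounded segment, and let g : ℓ → [0,∞) be an integrable β-log-concave function with ∫_ℓ g > 0, sandwiched by a log-concave function h on ℓ with e^{−β} h(x) ≤ g(x) ≤ h(x) for all x ∈ ℓ. Let p ∈ ℓ satisfy g(p) ≥ e^{−3β} sup_{z∈ℓ} g(z), let ε̃ ∈ (0, e^{−2β}/2), and let e_{−1} ≤ p ≤ e_1 be points of ℓ such that: either e_{−1} = x̲ and g(x̲) ≥ (1/2)e^{−β} ε̃ g(p), or (1/2)e^{−β} ε̃ g(p) ≤ g(e_{−1}) ≤ ε̃ g(p); and symmetrically either e_1 = x̄ and g(x̄) ≥ (1/2)e^{−β} ε̃ g(p), or (1/2)e^{−β} ε̃ g(p) ≤ g(e_1) ≤ ε̃ g(p). If X is uniformly distributed on [e_{−1}, e_1], then P( g(X) ≥ (1/2) e^{−2β} g(p) ) ≥ (log 2) / log(2/ε̃). -/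
import Mathlib


open MeasureTheory

/-- Auxiliary: the pointwise acceptance computation. -/
lemma accept_aux (β ε gp ge α : ℝ) (hβ : 0 ≤ β) (hε0 : 0 < ε) (hεhalf : ε < 1/2)
    (hgp : 0 < gp) (hge : (1/2) * Real.exp (-β) * ε * gp ≤ ge)
    (hα0 : 0 ≤ α) (hαc : α ≤ Real.log 2 / Real.log (2/ε)) :
    (1/2) * Real.exp (-2*β) * gp ≤ Real.exp (-β) * (ge ^ α * gp ^ (1 - α)) := by
  have hexpβ : (0:ℝ) < Real.exp (-β) := Real.exp_pos _
  have hexpβ1 : Real.exp (-β) ≤ 1 := Real.exp_le_one_iff.mpr (by linarith)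
  have hlog2 : (0:ℝ) < Real.log 2 := Real.log_pos one_lt_two
  have hL2 : Real.log 2 ≤ Real.log (2/ε) := by
    apply Real.log_le_log (by norm_num)
    rw [le_div_iff₀ hε0]; nlinarith
  have hL0 : (0:ℝ) < Real.log (2/ε) := lt_of_lt_of_le hlog2 hL2
  have hc1' : Real.log 2 / Real.log (2/ε) ≤ 1 := (div_le_one hL0).mpr hL2
  have hcL : (Real.log 2 / Real.log (2/ε)) * Real.log (2/ε) = Real.log 2 :=
    div_mul_cancel₀ _ hL0.ne'
  have hc0 : 0 < Real.log 2 / Real.log (2/ε) := div_pos hlog2 hL0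
  set t : ℝ := (1/2) * Real.exp (-β) * ε with htdef
  have ht0 : 0 < t := by positivity
  have ht1 : t ≤ 1 := by nlinarith
  have hlogt : Real.log t = -(Real.log (2/ε)) - β := by
    have hL' : Real.log (2/ε) = Real.log 2 - Real.log ε :=
      Real.log_div (by norm_num) hε0.ne'
    have h1 : Real.log t = Real.log ((1/2) * Real.exp (-β)) + Real.log ε := by
      rw [htdef, Real.log_mul (by positivity) hε0.ne']
    have h2 : Real.log ((1/2) * Real.exp (-β)) = -Real.log 2 + (-β) := by
      rw [Real.log_mul (by norm_num) hexpβ.ne', Real.log_exp,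
        show (1/2 : ℝ) = 2⁻¹ by norm_num, Real.log_inv]
    rw [h1, h2, hL']; ring
  have htc : (1/2) * Real.exp (-β) ≤ t ^ (Real.log 2 / Real.log (2/ε)) := by
    rw [Real.rpow_def_of_pos ht0]
    have he2 : Real.exp (-Real.log 2) = 1/2 := by
      rw [Real.exp_neg, Real.exp_log (by norm_num : (0:ℝ) < 2)]; norm_num
    have hhalf : (1/2 : ℝ) * Real.exp (-β) = Real.exp (-Real.log 2 + (-β)) := by
      rw [Real.exp_add, he2]
    rw [hhalf]
    apply Real.exp_le_exp.mpr
    rw [hlogt]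
    have hcβ : (Real.log 2 / Real.log (2/ε)) * β ≤ β := by nlinarith
    nlinarith
  have hα1 : α ≤ 1 := le_trans hαc hc1'
  have hme : t * gp ≤ ge := hge
  have hm0 : (0:ℝ) ≤ t * gp := by positivity
  have hstep : (t * gp) ^ α ≤ ge ^ α := Real.rpow_le_rpow hm0 hme hα0
  have hgpp : gp ^ α * gp ^ (1 - α) = gp := by
    rw [← Real.rpow_add hgp]; norm_num
  have hA : t ^ α * gp ≤ ge ^ α * gp ^ (1 - α) := by
    calc t ^ α * gp = t ^ α * (gp ^ α * gp ^ (1 - α)) := by rw [hgpp]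
      _ = (t ^ α * gp ^ α) * gp ^ (1 - α) := by ring
      _ = (t * gp) ^ α * gp ^ (1 - α) := by rw [Real.mul_rpow ht0.le hgp.le]
      _ ≤ ge ^ α * gp ^ (1 - α) :=
          mul_le_mul_of_nonneg_right hstep (Real.rpow_nonneg hgp.le _)
  have htα : (1/2) * Real.exp (-β) ≤ t ^ α :=
    le_trans htc (Real.rpow_le_rpow_of_exponent_ge ht0 ht1 hαc)
  have hB : (1/2) * Real.exp (-β) * gp ≤ t ^ α * gp :=
    mul_le_mul_of_nonneg_right htα hgp.le
  have hexp2 : Real.exp (-β) * Real.exp (-β) = Real.exp (-2*β) := by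
    rw [← Real.exp_add]; ring_nf
  calc (1/2) * Real.exp (-2 * β) * gp
      = Real.exp (-β) * ((1/2) * Real.exp (-β) * gp) := by rw [← hexp2]; ring
    _ ≤ Real.exp (-β) * (t ^ α * gp) := mul_le_mul_of_nonneg_left hB hexpβ.le
    _ ≤ Real.exp (-β) * (ge ^ α * gp ^ (1 - α)) := mul_le_mul_of_nonneg_left hA hexpβ.le

/-- In the setting of the unidimensional rejection sampler (a
`β`-log-concave `g` on `ℓ = [x̲, x̄]` sandwiched by a log-concave `h`, a point `p` with
`g(p) ≥ e^{−3β} sup_ℓ g`, accuracy `ε̃ ∈ (0, e^{−2β}/2)` and points `e₋ ≤ p ≤ e₁` chosen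
as in the initialization), if `X` is uniform on `[e₋, e₁]` then
`P(g(X) ≥ (1/2) e^{−2β} g(p)) ≥ log 2 / log (2/ε̃)`. -/
theorem uniform_acceptance_probability_lower_bound
    (β xlo xhi : ℝ) (hβ : 0 ≤ β) (g h : ℝ → ℝ)
    (hg0 : ∀ x ∈ Set.Icc xlo xhi, 0 ≤ g x)
    (hgβ : ∀ x ∈ Set.Icc xlo xhi, ∀ y ∈ Set.Icc xlo xhi, ∀ α : ℝ, α ∈ Set.Icc (0:ℝ) 1 →
      Real.exp (-β) * (g x ^ α * g y ^ (1 - α)) ≤ g (α * x + (1 - α) * y))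
    (hgint : IntegrableOn g (Set.Icc xlo xhi))
    (hgpos : 0 < ∫ x in Set.Icc xlo xhi, g x)
    (hh0 : ∀ x ∈ Set.Icc xlo xhi, 0 ≤ h x)
    (hhlogconc : ∀ x ∈ Set.Icc xlo xhi, ∀ y ∈ Set.Icc xlo xhi, ∀ α : ℝ, α ∈ Set.Icc (0:ℝ) 1 →
      h x ^ α * h y ^ (1 - α) ≤ h (α * x + (1 - α) * y))
    (hsand : ∀ x ∈ Set.Icc xlo xhi, Real.exp (-β) * h x ≤ g x ∧ g x ≤ h x)
    (p : ℝ) (hp : p ∈ Set.Icc xlo xhi)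
    (hpmax : ∀ z ∈ Set.Icc xlo xhi, Real.exp (-3 * β) * g z ≤ g p)
    (ε : ℝ) (hε0 : 0 < ε) (hε1 : ε < Real.exp (-2 * β) / 2)
    (em e1 : ℝ) (hem : em ∈ Set.Icc xlo xhi) (he1 : e1 ∈ Set.Icc xlo xhi)
    (hpem : em ≤ p) (hpe1 : p ≤ e1)
    (hcm : (em = xlo ∧ (1/2) * Real.exp (-β) * ε * g p ≤ g xlo) ∨
           ((1/2) * Real.exp (-β) * ε * g p ≤ g em ∧ g em ≤ ε * g p))
    (hc1 : (e1 = xhi ∧ (1/2) * Real.exp (-β) * ε * g p ≤ g xhi) ∨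
           ((1/2) * Real.exp (-β) * ε * g p ≤ g e1 ∧ g e1 ≤ ε * g p)) :
    ENNReal.ofReal (Real.log 2 / Real.log (2 / ε))
      ≤ ((volume (Set.Icc em e1))⁻¹ • volume.restrict (Set.Icc em e1))
          {x | (1/2) * Real.exp (-2 * β) * g p ≤ g x} := by
  have hexpβ : (0:ℝ) < Real.exp (-β) := Real.exp_pos _
  have hexp2β1 : Real.exp (-2*β) ≤ 1 := Real.exp_le_one_iff.mpr (by linarith)
  have hεhalf : ε < 1/2 := by nlinarith
  -- g p > 0
  have hgp : 0 < g p := by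
    rcases lt_or_ge 0 (g p) with h' | h'
    · exact h'
    · exfalso
      have hgp0 : g p = 0 := le_antisymm h' (hg0 p hp)
      have hz : ∀ z ∈ Set.Icc xlo xhi, g z = 0 := by
        intro z hzm
        have h1 := hpmax z hzm
        have h2 := hg0 z hzm
        have h3 : 0 < Real.exp (-3*β) := Real.exp_pos _
        nlinarith
      have : ∫ x in Set.Icc xlo xhi, g x = 0 := by
        rw [setIntegral_congr_fun measurableSet_Icc hz]
        simp
      linarith
  -- em < e1
  have hεgp : ε * g p < g p := by nlinarith
  have heme1 : em < e1 := by
    rcases lt_or_ge em e1 with h' | h'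
    · exact h'
    · exfalso
      have hpe : em = p := le_antisymm hpem (le_trans hpe1 h')
      have he1p : e1 = p := le_antisymm (le_trans h' hpem) hpe1
      have hmlo : em = xlo := by
        rcases hcm with ⟨h1, _⟩ | ⟨_, h2⟩
        · exact h1
        · rw [hpe] at h2; linarith
      have h1hi : e1 = xhi := by
        rcases hc1 with ⟨h1, _⟩ | ⟨_, h2⟩
        · exact h1
        · rw [he1p] at h2; linarith
      have hxx : xlo = xhi := by rw [← hmlo, ← h1hi, hpe, he1p]
      have : ∫ x in Set.Icc xlo xhi, g x = 0 := by
        have h0 : volume.restrict (Set.Icc xlo xhi) = 0 := by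
          rw [Measure.restrict_eq_zero, hxx, Set.Icc_self, Real.volume_singleton]
        rw [show (∫ x in Set.Icc xlo xhi, g x)
              = ∫ x, g x ∂(volume.restrict (Set.Icc xlo xhi)) from rfl,
          h0, integral_zero_measure]
      linarith
  -- basic facts about c
  have hlog2 : (0:ℝ) < Real.log 2 := Real.log_pos one_lt_two
  have hL2 : Real.log 2 ≤ Real.log (2/ε) := by
    apply Real.log_le_log (by norm_num)
    rw [le_div_iff₀ hε0]; nlinarith
  have hL0 : (0:ℝ) < Real.log (2/ε) := lt_of_lt_of_le hlog2 hL2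
  have hc0 : 0 < Real.log 2 / Real.log (2/ε) := div_pos hlog2 hL0
  have hc1' : Real.log 2 / Real.log (2/ε) ≤ 1 := (div_le_one hL0).mpr hL2
  -- key acceptance lemma
  have key : ∀ e ∈ Set.Icc xlo xhi, (1/2) * Real.exp (-β) * ε * g p ≤ g e →
      ∀ α : ℝ, 0 ≤ α → α ≤ Real.log 2 / Real.log (2/ε) →
      (1/2) * Real.exp (-2 * β) * g p ≤ g (α * e + (1 - α) * p) := by
    intro e he hge α hα0 hαc
    refine le_trans ?_ (hgβ e he p hp α ⟨hα0, le_trans hαc hc1'⟩)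
    exact accept_aux β ε (g p) (g e) α hβ hε0 hεhalf hgp hge hα0 hαc
  -- lower bounds at both endpoints
  have hgem : (1/2) * Real.exp (-β) * ε * g p ≤ g em := by
    rcases hcm with ⟨h1, h2⟩ | ⟨h2, _⟩
    · rw [h1]; exact h2
    · exact h2
  have hge1 : (1/2) * Real.exp (-β) * ε * g p ≤ g e1 := by
    rcases hc1 with ⟨h1, h2⟩ | ⟨h2, _⟩
    · rw [h1]; exact h2
    · exact h2
  -- the accepted interval
  have hab : Set.Icc (p - (Real.log 2 / Real.log (2/ε)) * (p - em))
        (p + (Real.log 2 / Real.log (2/ε)) * (e1 - p))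
      ⊆ {x | (1/2) * Real.exp (-2 * β) * g p ≤ g x} ∩ Set.Icc em e1 := by
    intro x hx
    obtain ⟨hxa, hxb⟩ := hx
    refine ⟨?_, ?_, ?_⟩
    · show (1/2) * Real.exp (-2 * β) * g p ≤ g x
      rcases le_or_gt x p with hxp | hxp
      · rcases eq_or_lt_of_le hpem with hep | hep
        · have hxeq : x = p := by
            have h' : p - (Real.log 2 / Real.log (2/ε)) * (p - em) = p := by
              rw [← hep]; ring
            rw [h'] at hxa; linarith
          rw [hxeq]; nlinarith [hexp2β1, hgp]
        · have hden : 0 < p - em := by linarith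
          have hα0 : 0 ≤ (p - x) / (p - em) := div_nonneg (by linarith) hden.le
          have hαc : (p - x) / (p - em) ≤ Real.log 2 / Real.log (2/ε) := by
            rw [div_le_iff₀ hden]; linarith
          have heq : ((p - x) / (p - em)) * em + (1 - (p - x) / (p - em)) * p = x := by
            field_simp
            ring
          have := key em hem hgem _ hα0 hαc
          rwa [heq] at this
      · rcases eq_or_lt_of_le hpe1 with hep | hep
        · have hxeq : x = p := by
            have h' : p + (Real.log 2 / Real.log (2/ε)) * (e1 - p) = p := by
              rw [hep]; ring
            rw [h'] at hxb; linarith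
          rw [hxeq]; nlinarith [hexp2β1, hgp]
        · have hden : 0 < e1 - p := by linarith
          have hα0 : 0 ≤ (x - p) / (e1 - p) := div_nonneg (by linarith) hden.le
          have hαc : (x - p) / (e1 - p) ≤ Real.log 2 / Real.log (2/ε) := by
            rw [div_le_iff₀ hden]; linarith
          have heq : ((x - p) / (e1 - p)) * e1 + (1 - (x - p) / (e1 - p)) * p = x := by
            field_simp
            ring
          have := key e1 he1 hge1 _ hα0 hαc
          rwa [heq] at this
    · have h2 : Real.log 2 / Real.log (2/ε) * (p - em) ≤ p - em :=
        mul_le_of_le_one_left (by linarith) hc1'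
      linarith [h2, hxa]
    · have h2 : Real.log 2 / Real.log (2/ε) * (e1 - p) ≤ e1 - p :=
        mul_le_of_le_one_left (by linarith) hc1'
      linarith [h2, hxb]
  -- measure computation
  have hd : 0 < e1 - em := by linarith
  have hmeas : ENNReal.ofReal ((Real.log 2 / Real.log (2/ε)) * (e1 - em)) ≤
      volume.restrict (Set.Icc em e1) {x | (1/2) * Real.exp (-2 * β) * g p ≤ g x} := by
    rw [Measure.restrict_apply' measurableSet_Icc]
    calc ENNReal.ofReal ((Real.log 2 / Real.log (2/ε)) * (e1 - em))
        = volume (Set.Icc (p - (Real.log 2 / Real.log (2/ε)) * (p - em))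
            (p + (Real.log 2 / Real.log (2/ε)) * (e1 - p))) := by
          rw [Real.volume_Icc]; congr 1; ring
      _ ≤ volume ({x | (1/2) * Real.exp (-2 * β) * g p ≤ g x} ∩ Set.Icc em e1) :=
          measure_mono hab
  rw [Measure.smul_apply, smul_eq_mul, Real.volume_Icc]
  have hne0 : ENNReal.ofReal (e1 - em) ≠ 0 := by
    simp only [ne_eq, ENNReal.ofReal_eq_zero, not_le]; linarith
  have hnetop : ENNReal.ofReal (e1 - em) ≠ ⊤ := ENNReal.ofReal_ne_top
  calc ENNReal.ofReal (Real.log 2 / Real.log (2 / ε))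
      = (ENNReal.ofReal (e1 - em))⁻¹
          * ENNReal.ofReal ((Real.log 2 / Real.log (2/ε)) * (e1 - em)) := by
        rw [ENNReal.ofReal_mul hc0.le, mul_comm (ENNReal.ofReal _) (ENNReal.ofReal (e1 - em)),
          ← mul_assoc, ENNReal.inv_mul_cancel hne0 hnetop, one_mul]
    _ ≤ (ENNReal.ofReal (e1 - em))⁻¹ *
        volume.restrict (Set.Icc em e1) {x | (1/2) * Real.exp (-2 * β) * g p ≤ g x} :=
        mul_le_mul_right hmeas _
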